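/- Let p ≥ 5 be prime and let D = {−m, −m+1, ..., m} ⊆ ℤ/pℤ with m < p/3, so |D| = 2m+1. Then for every integer k ≥ 1, T_D^{(k)}(D) = (m+1)^{k+1} − m^{k+1}. -/
import Mathlib


open Finset

/-- `T D A k` = number of `k`-tuples `(a_1, ..., a_k) ∈ A^k` with
`a_i - a_j ∈ D` for all `i, j`. -/
def T {G : Type*} [AddCommGroup G] [DecidableEq G] (D A : Finset G) (k : ℕ) : ℕ :=
  ((Fintype.piFinset fun _ : Fin k => A).filter fun a => ∀ i j, a i - a j ∈ D).card

lemma cast_eq_zero_small {p m : ℕ} (hp : p.Prime) (hm : 3 * m < p) {d : ℤ}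
    (h1 : -(3 * (m : ℤ)) ≤ d) (h2 : d ≤ 3 * m) (h : (d : ZMod p) = 0) : d = 0 := by
  haveI : NeZero p := ⟨hp.pos.ne'⟩
  rw [ZMod.intCast_zmod_eq_zero_iff_dvd] at h
  by_contra hd
  have h3 : (p : ℤ) ≤ |d| := Int.le_of_dvd (abs_pos.mpr hd) ((dvd_abs _ _).mpr h)
  rcases abs_cases d with ⟨h4, h5⟩ | ⟨h4, h5⟩ <;> omega

theorem stmt5 (p : ℕ) (hp : p.Prime) (hp5 : 5 ≤ p) (m : ℕ) (hm : 3 * m < p)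
    (D : Finset (ZMod p))
    (hD : D = (Finset.Icc (-(m : ℤ)) m).image (Int.cast : ℤ → ZMod p))
    (k : ℕ) (hk : 1 ≤ k) :
    T D D k = (m + 1) ^ (k + 1) - m ^ (k + 1) := by
  classical
  haveI : NeZero p := ⟨hp.pos.ne'⟩
  have hmem : ∀ d : ℤ, -(m : ℤ) ≤ d → d ≤ m → ((d : ZMod p) ∈ D) := by
    intro d h1 h2
    rw [hD]
    exact mem_image.mpr ⟨d, mem_Icc.mpr ⟨h1, h2⟩, rfl⟩
  have hmem' : ∀ d : ℤ, -(2 * (m : ℤ)) ≤ d → d ≤ 2 * m → (d : ZMod p) ∈ D →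
      (-(m : ℤ) ≤ d ∧ d ≤ m) := by
    intro d h1 h2 hd
    rw [hD, mem_image] at hd
    obtain ⟨e, he, hde⟩ := hd
    rw [mem_Icc] at he
    have h0 : ((d - e : ℤ) : ZMod p) = 0 := by push_cast; rw [hde]; ring
    have := cast_eq_zero_small hp hm (d := d - e) (by omega) (by omega) h0
    omega
  set S := (Fintype.piFinset fun _ : Fin k => D).filter (fun a => ∀ i j, a i - a j ∈ D) with hS
  set H := (Fintype.piFinset fun _ : Fin (k + 1) => Finset.range (m + 1)).filter
      (fun h => ∃ i, h i = m) with hHdef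
  have hcard : H.card = (m + 1) ^ (k + 1) - m ^ (k + 1) := by
    have h1 : (Fintype.piFinset fun _ : Fin (k + 1) => Finset.range (m + 1)).card
        = (m + 1) ^ (k + 1) := by
      simp [Fintype.card_piFinset]
    have h2 : ((Fintype.piFinset fun _ : Fin (k + 1) => Finset.range (m + 1)).filter
        (fun h => ¬ ∃ i, h i = m)).card = m ^ (k + 1) := by
      have heq : (Fintype.piFinset fun _ : Fin (k + 1) => Finset.range (m + 1)).filter
          (fun h => ¬ ∃ i, h i = m) = Fintype.piFinset fun _ : Fin (k + 1) => Finset.range m := by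
        ext f
        simp only [mem_filter, Fintype.mem_piFinset, mem_range, not_exists]
        constructor
        · rintro ⟨hf, hne⟩ i
          have := hf i; have := hne i; omega
        · intro hf
          exact ⟨fun i => by have := hf i; omega, fun i => by have := hf i; omega⟩
      rw [heq]; simp [Fintype.card_piFinset]
    have h3 := Finset.card_filter_add_card_filter_not
      (s := Fintype.piFinset fun _ : Fin (k + 1) => Finset.range (m + 1))
      (p := fun h => ∃ i, h i = m)
    rw [h1, h2] at h3
    rw [hHdef]
    exact Nat.eq_sub_of_add_eq h3
  have hHb : ∀ h ∈ H, ∀ i, h i ≤ m := by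
    intro h hh i
    rw [hHdef, mem_filter, Fintype.mem_piFinset] at hh
    have := hh.1 i
    rw [mem_range] at this
    omega
  have hbij : H.card = S.card := by
    apply Finset.card_bij (fun h _ => fun i : Fin k => ((h i.succ : ZMod p) - (h 0 : ZMod p)))
    · -- maps into S
      intro h hh
      rw [hS, mem_filter, Fintype.mem_piFinset]
      have hb := hHb h hh
      constructor
      · intro i
        have : ((h i.succ : ZMod p) - (h 0 : ZMod p))
            = (((h i.succ : ℤ) - (h 0 : ℤ) : ℤ) : ZMod p) := by push_cast; ring
        rw [this]
        exact hmem _ (by have := hb i.succ; have := hb 0; omega)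
          (by have := hb i.succ; have := hb 0; omega)
      · intro i j
        have : ((h i.succ : ZMod p) - (h 0 : ZMod p)) - ((h j.succ : ZMod p) - (h 0 : ZMod p))
            = (((h i.succ : ℤ) - (h j.succ : ℤ) : ℤ) : ZMod p) := by push_cast; ring
        rw [this]
        exact hmem _ (by have := hb i.succ; have := hb j.succ; omega)
          (by have := hb i.succ; have := hb j.succ; omega)
    · -- injective
      intro h1 hh1 h2 hh2 heq
      have hb1 := hHb h1 hh1
      have hb2 := hHb h2 hh2
      have e : ∀ i : Fin k, (h1 i.succ : ℤ) - h1 0 = (h2 i.succ : ℤ) - h2 0 := by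
        intro i
        have := congrFun heq i
        have h0 : (((h1 i.succ : ℤ) - h1 0 - ((h2 i.succ : ℤ) - h2 0) : ℤ) : ZMod p) = 0 := by
          push_cast
          rw [sub_eq_zero]
          exact_mod_cast this
        have := cast_eq_zero_small hp hm (d := (h1 i.succ : ℤ) - h1 0 - ((h2 i.succ : ℤ) - h2 0))
          (by have := hb1 i.succ; have := hb1 0; have := hb2 i.succ; have := hb2 0; omega)
          (by have := hb1 i.succ; have := hb1 0; have := hb2 i.succ; have := hb2 0; omega) h0
        omega
      obtain ⟨i1, hi1⟩ := (mem_filter.mp (hHdef ▸ hh1)).2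
      obtain ⟨i2, hi2⟩ := (mem_filter.mp (hHdef ▸ hh2)).2
      have hc1 : (h2 0 : ℤ) ≤ h1 0 := by
        rcases Fin.eq_zero_or_eq_succ i1 with rfl | ⟨j, rfl⟩
        · have := hb2 0; omega
        · have := e j; have := hb2 j.succ; omega
      have hc2 : (h1 0 : ℤ) ≤ h2 0 := by
        rcases Fin.eq_zero_or_eq_succ i2 with rfl | ⟨j, rfl⟩
        · have := hb1 0; omega
        · have := e j; have := hb1 j.succ; omega
      funext x
      rcases Fin.eq_zero_or_eq_succ x with rfl | ⟨j, rfl⟩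
      · omega
      · have := e j; omega
    · -- surjective
      intro a ha
      rw [hS, mem_filter, Fintype.mem_piFinset] at ha
      obtain ⟨haD, hpair⟩ := ha
      have hx : ∀ i, ∃ y : ℤ, (-(m : ℤ) ≤ y ∧ y ≤ m) ∧ (y : ZMod p) = a i := by
        intro i
        have := haD i
        rw [hD, mem_image] at this
        obtain ⟨y, hy, hya⟩ := this
        rw [mem_Icc] at hy
        exact ⟨y, hy, hya⟩
      choose x hxb hxa using hx
      have hpx : ∀ i j, x i - x j ≤ m := by
        intro i j
        have h1 := hpair i j
        have h2 : ((x i - x j : ℤ) : ZMod p) ∈ D := by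
          push_cast
          rw [hxa i, hxa j]
          exact h1
        exact (hmem' _ (by have := hxb i; have := hxb j; omega)
          (by have := hxb i; have := hxb j; omega) h2).2
      set Mset := insert (0 : ℤ) (Finset.image x Finset.univ) with hMset
      have hMne : Mset.Nonempty := insert_nonempty _ _
      set M := Mset.max' hMne with hMdef
      have hM0 : (0 : ℤ) ≤ M := le_max' _ _ (mem_insert_self _ _)
      have hMx : ∀ i, x i ≤ M := fun i =>
        le_max' _ _ (mem_insert_of_mem (mem_image_of_mem x (mem_univ i)))
      have hMmem := max'_mem Mset hMne
      have hMm : M ≤ m := by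
        rcases mem_insert.mp hMmem with h0 | hin
        · rw [← hMdef] at h0; omega
        · obtain ⟨i, _, hi⟩ := mem_image.mp hin
          have := hxb i; omega
      have hMlb : ∀ i, M - x i ≤ m := by
        intro i
        rcases mem_insert.mp hMmem with h0 | hin
        · rw [← hMdef] at h0; have := hxb i; omega
        · obtain ⟨j, _, hj⟩ := mem_image.mp hin
          have := hpx j i; omega
      refine ⟨fun i : Fin (k + 1) => Fin.cases ((m : ℤ) - M).toNat
        (fun j => (x j + ((m : ℤ) - M)).toNat) i, ?_, ?_⟩
      · rw [hHdef, mem_filter, Fintype.mem_piFinset]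
        constructor
        · intro i
          rw [mem_range]
          rcases Fin.eq_zero_or_eq_succ i with rfl | ⟨j, rfl⟩
          · simp only [Fin.cases_zero]; omega
          · simp only [Fin.cases_succ]
            have := hxb j; have := hMx j; have := hMlb j; omega
        · rcases mem_insert.mp hMmem with h0 | hin
          · refine ⟨0, ?_⟩
            simp only [Fin.cases_zero]
            rw [← hMdef] at h0; omega
          · obtain ⟨j, _, hj⟩ := mem_image.mp hin
            refine ⟨j.succ, ?_⟩
            simp only [Fin.cases_succ]
            have := hxb j; omega
      · funext i
        simp only [Fin.cases_succ, Fin.cases_zero]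
        have e1 : (((x i + ((m : ℤ) - M)).toNat : ℤ)) = x i + ((m : ℤ) - M) := by
          have := hMlb i; omega
        have e2 : ((((m : ℤ) - M).toNat : ℤ)) = (m : ℤ) - M := by omega
        have : (((x i + ((m : ℤ) - M)).toNat : ZMod p)) - ((((m : ℤ) - M).toNat : ZMod p))
            = ((x i : ℤ) : ZMod p) := by
          have c1 : (((x i + ((m : ℤ) - M)).toNat : ZMod p))
              = (((x i + ((m : ℤ) - M) : ℤ)) : ZMod p) := by
            rw [← Int.cast_natCast (R := ZMod p), e1]
          have c2 : ((((m : ℤ) - M).toNat : ZMod p)) = ((((m : ℤ) - M : ℤ)) : ZMod p) := by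
            rw [← Int.cast_natCast (R := ZMod p), e2]
          rw [c1, c2, ← Int.cast_sub]
          ring_nf
        rw [this, hxa i]
  have : T D D k = S.card := rfl
  rw [this, ← hbij, hcard]
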